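/- Let (L, L₀) be a nonlinear primitive pair. Then L is a simple Lie algebra, the subspace L₁ = {x ∈ L₀ : [x, L] ⊆ L₀} is abelian, and L₂ = (0), where L₂ = {x ∈ L₁ : [x, L] ⊆ L₁}. -/

import Mathlib

open Polynomial Module LinearMap

section Helpers

variable {W : Type*} [AddCommGroup W] [Module ℂ W]

private lemma commute_aeval' {g h : Module.End ℂ W}
    (hc : Commute g h) (p : ℂ[X]) : Commute g (Polynomial.aeval h p) := by
  induction p using Polynomial.induction_on' with
  | add p q hp hq => rw [map_add]; exact hp.add_right hq
  | monomial n a =>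
    rw [Polynomial.aeval_monomial]
    exact (Algebra.commute_algebraMap_right a g).mul_right (hc.pow_right n)

private lemma aeval_apply_mem (g : Module.End ℂ W)
    (A : Submodule ℂ W) (hg : ∀ w ∈ A, g w ∈ A) (p : ℂ[X]) {w : W} (hw : w ∈ A) :
    (Polynomial.aeval g p) w ∈ A := by
  have hpow : ∀ n : ℕ, (g ^ n) w ∈ A := by
    intro n
    induction n with
    | zero => simpa using hw
    | succ k ih => rw [pow_succ']; exact hg _ ih
  rw [Polynomial.aeval_eq_sum_range]
  rw [LinearMap.sum_apply]
  refine Submodule.sum_mem _ fun i _ => ?_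
  rw [LinearMap.smul_apply]
  exact Submodule.smul_mem _ _ (hpow i)

private lemma aeval_apply_of_smul (g : Module.End ℂ W)
    {c : ℂ} {w : W} (h : g w = c • w) (p : ℂ[X]) :
    (Polynomial.aeval g p) w = p.eval c • w := by
  have hpow : ∀ n : ℕ, (g ^ n) w = c ^ n • w := by
    intro n
    induction n with
    | zero => simp
    | succ k ih =>
        rw [pow_succ', Module.End.mul_apply, ih, map_smul, h, smul_smul, pow_succ']
        ring_nf
  induction p using Polynomial.induction_on' with
  | add p q hp hq => rw [map_add, LinearMap.add_apply, hp, hq, eval_add, add_smul]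
  | monomial n a =>
    rw [Polynomial.aeval_monomial, eval_monomial, Module.End.mul_apply, hpow,
      Module.algebraMap_end_apply, smul_smul]

end Helpers

section PolyHelpers

private lemma isCoprime_X_sub_C' {a b : ℂ} (h : a ≠ b) :
    IsCoprime (X - C a) (X - C b) := by
  refine ⟨C (b - a)⁻¹, -C (b - a)⁻¹, ?_⟩
  have hba : b - a ≠ 0 := sub_ne_zero.mpr (Ne.symm h)
  have : C (b - a)⁻¹ * (X - C a) + -C (b - a)⁻¹ * (X - C b) = C ((b - a)⁻¹ * (b - a)) := by
    rw [C_mul, C_sub]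
    ring
  rw [this, inv_mul_cancel₀ hba, C_1]

private lemma prod_X_sub_C_dvd_of_roots {t : Finset ℂ} {p : ℂ[X]}
    (h : ∀ μ ∈ t, p.eval μ = 0) : (∏ μ ∈ t, (X - C μ)) ∣ p := by
  classical
  induction t using Finset.induction_on with
  | empty => simpa using one_dvd p
  | @insert a t ha ih =>
    rw [Finset.prod_insert ha]
    have h1 : (X - C a) ∣ p := dvd_iff_isRoot.mpr (h a (Finset.mem_insert_self _ _))
    have h2 : (∏ μ ∈ t, (X - C μ)) ∣ p := ih fun μ hμ => h μ (Finset.mem_insert_of_mem hμ)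
    have hcop : IsCoprime (X - C a) (∏ μ ∈ t, (X - C μ)) := by
      refine IsCoprime.prod_right fun μ hμ => isCoprime_X_sub_C' ?_
      rintro rfl; exact ha hμ
    exact hcop.mul_dvd h1 h2

private lemma eval_lagrange_sum (t : Finset ℂ) (r : ℂ → ℂ) {c : ℂ} (hc : c ∈ t) :
    Polynomial.eval c (∑ μ ∈ t, C (r μ) * Lagrange.basis t _root_.id μ) = r c := by
  classical
  rw [Polynomial.eval_finset_sum]
  rw [Finset.sum_eq_single c]
  · have h1 : Polynomial.eval (_root_.id c) (Lagrange.basis t _root_.id c) = 1 :=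
      Lagrange.eval_basis_self (Set.injOn_id _) hc
    simp only [id_eq] at h1
    rw [eval_mul, eval_C, h1, mul_one]
  · intro b hb hbc
    have h0 : Polynomial.eval (_root_.id c) (Lagrange.basis t _root_.id b) = 0 :=
      Lagrange.eval_basis_of_ne hbc hc
    simp only [id_eq] at h0
    rw [eval_mul, h0, mul_zero]
  · intro hcc; exact absurd hc hcc

end PolyHelpers

section MulLeftRight

variable {B : Type*} [Ring B] [Algebra ℂ B]

private lemma mulLeft_smul' (a : ℂ) (u : B) :
    LinearMap.mulLeft ℂ (a • u) = a • LinearMap.mulLeft ℂ u := by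
  ext T; simp [smul_mul_assoc]

private lemma mulRight_smul' (a : ℂ) (u : B) :
    LinearMap.mulRight ℂ (a • u) = a • LinearMap.mulRight ℂ u := by
  ext T; simp [mul_smul_comm]

private lemma mulLeft_add' (u v : B) :
    LinearMap.mulLeft ℂ (u + v) = LinearMap.mulLeft ℂ u + LinearMap.mulLeft ℂ v := by
  ext T; simp [add_mul]

private lemma mulRight_add' (u v : B) :
    LinearMap.mulRight ℂ (u + v) = LinearMap.mulRight ℂ u + LinearMap.mulRight ℂ v := by
  ext T; simp [mul_add]

private lemma aeval_mulLeft (s : B) (p : ℂ[X]) :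
    Polynomial.aeval (LinearMap.mulLeft ℂ s : Module.End ℂ B) p
      = LinearMap.mulLeft ℂ (Polynomial.aeval s p) := by
  induction p using Polynomial.induction_on' with
  | add p q hp hq => rw [map_add, hp, hq, map_add, mulLeft_add']
  | monomial n a =>
    rw [Polynomial.aeval_monomial, Polynomial.aeval_monomial, Algebra.algebraMap_eq_smul_one,
      Algebra.algebraMap_eq_smul_one, smul_mul_assoc, one_mul, smul_mul_assoc, one_mul,
      LinearMap.pow_mulLeft, mulLeft_smul']

private lemma aeval_mulRight (s : B) (p : ℂ[X]) :
    Polynomial.aeval (LinearMap.mulRight ℂ s : Module.End ℂ B) p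
      = LinearMap.mulRight ℂ (Polynomial.aeval s p) := by
  induction p using Polynomial.induction_on' with
  | add p q hp hq => rw [map_add, hp, hq, map_add, mulRight_add']
  | monomial n a =>
    rw [Polynomial.aeval_monomial, Polynomial.aeval_monomial, Algebra.algebraMap_eq_smul_one,
      Algebra.algebraMap_eq_smul_one, smul_mul_assoc, one_mul, smul_mul_assoc, one_mul,
      LinearMap.pow_mulRight, mulRight_smul']

private lemma commute_mulLeft_mulRight' (a b : B) :
    Commute (LinearMap.mulLeft ℂ a : Module.End ℂ B) (LinearMap.mulRight ℂ b) := by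
  apply LinearMap.ext; intro T
  simp [mul_assoc]

private lemma commute_mulLeft_mulLeft' {a b : B} (h : Commute a b) :
    Commute (LinearMap.mulLeft ℂ a : Module.End ℂ B) (LinearMap.mulLeft ℂ b) := by
  apply LinearMap.ext; intro T
  simp only [Module.End.mul_apply, LinearMap.mulLeft_apply, ← mul_assoc, h.eq]

private lemma commute_mulRight_mulRight' {a b : B} (h : Commute a b) :
    Commute (LinearMap.mulRight ℂ a : Module.End ℂ B) (LinearMap.mulRight ℂ b) := by
  apply LinearMap.ext; intro T
  simp only [Module.End.mul_apply, LinearMap.mulRight_apply, mul_assoc, h.eq]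

private lemma isNilpotent_mulLeft' {a : B} (h : IsNilpotent a) :
    IsNilpotent (LinearMap.mulLeft ℂ a : Module.End ℂ B) := by
  obtain ⟨k, hk⟩ := h
  exact ⟨k, by rw [LinearMap.pow_mulLeft, hk]; ext T; simp⟩

private lemma isNilpotent_mulRight' {a : B} (h : IsNilpotent a) :
    IsNilpotent (LinearMap.mulRight ℂ a : Module.End ℂ B) := by
  obtain ⟨k, hk⟩ := h
  exact ⟨k, by rw [LinearMap.pow_mulRight, hk]; ext T; simp⟩

end MulLeftRight

section CartanCore

variable {V : Type*} [AddCommGroup V] [Module ℂ V] [FiniteDimensional ℂ V]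


private theorem isNilpotent_of_traceless (A : Submodule ℂ (Module.End ℂ V))
    (hbr : ∀ a ∈ A, ∀ b ∈ A, a * b - b * a ∈ A)
    (htr : ∀ a ∈ A, ∀ b ∈ A, LinearMap.trace ℂ V (a * b) = 0)
    {x : Module.End ℂ V} (hxA : x ∈ A)
    (hx : x ∈ Submodule.span ℂ {z | ∃ a ∈ A, ∃ b ∈ A, z = a * b - b * a}) :
    IsNilpotent x := by
  rcases subsingleton_or_nontrivial V with hV | hV
  · exact ⟨1, by ext v; simp [Subsingleton.elim v 0]⟩
  classical
  -- Jordan-Chevalley decomposition of x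
  obtain ⟨n, hn_mem, s, hs_mem, hn_nil, hs_ss, hx_eq⟩ :=
    Module.End.exists_isNilpotent_isSemisimple (f := x)
  -- elements of adjoin ℂ {x} commute
  have hcomm_adjoin : ∀ u ∈ Algebra.adjoin ℂ {x}, ∀ v ∈ Algebra.adjoin ℂ {x}, Commute u v := by
    intro u hu v hv
    rw [Algebra.adjoin_singleton_eq_range_aeval] at hu hv
    obtain ⟨p, hp⟩ := hu; obtain ⟨q, hq⟩ := hv
    rw [← hp, ← hq, commute_iff_eq, ← map_mul, ← map_mul, mul_comm]
  have hns : Commute n s := hcomm_adjoin n hn_mem s hs_mem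
  -- minimal polynomial data
  have hs_int : IsIntegral ℂ s := Algebra.IsIntegral.isIntegral s
  have hσ0 : minpoly ℂ s ≠ 0 := minpoly.ne_zero hs_int
  have hmon : (minpoly ℂ s).Monic := minpoly.monic hs_int
  have hsq : Squarefree (minpoly ℂ s) := hs_ss.minpoly_squarefree
  have hsep : (minpoly ℂ s).Separable := PerfectField.separable_iff_squarefree.mpr hsq
  have hnodup : (minpoly ℂ s).roots.Nodup := Polynomial.nodup_roots hsep
  set Λ : Finset ℂ := (minpoly ℂ s).roots.toFinset with hΛdef
  have hΛval : Λ.val = (minpoly ℂ s).roots := Multiset.dedup_eq_self.mpr hnodup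
  have hσ_eq : minpoly ℂ s = ∏ μ ∈ Λ, (X - C μ) := by
    conv_lhs => rw [Polynomial.Splits.eq_prod_roots_of_monic
      (IsAlgClosed.splits _) hmon]
    rw [Finset.prod, hΛval]
  have hvan : ∀ p : ℂ[X], (∀ μ ∈ Λ, p.eval μ = 0) → Polynomial.aeval s p = 0 := by
    intro p hp
    have hdvd : minpoly ℂ s ∣ p := by
      rw [hσ_eq]; exact prod_X_sub_C_dvd_of_roots hp
    obtain ⟨q, hq⟩ := hdvd
    rw [hq, map_mul, minpoly.aeval, zero_mul]
  have haeq : ∀ p q : ℂ[X], (∀ ρ ∈ Λ, p.eval ρ = q.eval ρ) →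
      Polynomial.aeval s p = Polynomial.aeval s q := by
    intro p q h
    have h2 := hvan (p - q) (by intro ρ hρ; rw [eval_sub, h ρ hρ, sub_self])
    rw [map_sub, sub_eq_zero] at h2; exact h2
  have hΛne : Λ.Nonempty := by
    have hdeg : 0 < (minpoly ℂ s).degree := minpoly.degree_pos hs_int
    obtain ⟨μ, hμ⟩ := Complex.exists_root hdeg
    exact ⟨μ, Multiset.mem_toFinset.mpr ((Polynomial.mem_roots hσ0).mpr hμ)⟩
  have hℓ_self : ∀ μ ∈ Λ, (Lagrange.basis Λ _root_.id μ).eval μ = 1 := by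
    intro μ hμ
    have h1 : Polynomial.eval (_root_.id μ) (Lagrange.basis Λ _root_.id μ) = 1 :=
      Lagrange.eval_basis_self (Set.injOn_id _) hμ
    simpa using h1
  have hℓ_ne : ∀ μ, ∀ ρ ∈ Λ, μ ≠ ρ → (Lagrange.basis Λ _root_.id μ).eval ρ = 0 := by
    intro μ ρ hρ hne
    have h1 : Polynomial.eval (_root_.id ρ) (Lagrange.basis Λ _root_.id μ) = 0 :=
      Lagrange.eval_basis_of_ne hne hρ
    simpa using h1
  set π : ℂ → Module.End ℂ V := fun μ => Polynomial.aeval s (Lagrange.basis Λ _root_.id μ) with hπdef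
  have hπ_sum : ∑ μ ∈ Λ, π μ = 1 := by
    rw [hπdef, ← map_sum, Lagrange.sum_basis (Set.injOn_id _) hΛne, map_one]
  have hπs : ∀ μ ∈ Λ, s * π μ = μ • π μ := by
    intro μ hμ
    have h1 : s * π μ = Polynomial.aeval s (X * Lagrange.basis Λ _root_.id μ) := by
      rw [map_mul, aeval_X]
    have h2 : Polynomial.aeval s (X * Lagrange.basis Λ _root_.id μ)
        = Polynomial.aeval s (C μ * Lagrange.basis Λ _root_.id μ) := by
      apply haeq; intro ρ hρ
      rcases eq_or_ne ρ μ with rfl | hne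
      · rw [eval_mul, eval_mul, eval_X, eval_C]
      · rw [eval_mul, eval_mul, hℓ_ne μ ρ hρ (Ne.symm hne), mul_zero, mul_zero]
    rw [h1, h2, map_mul, aeval_C, ← Algebra.smul_def]
  have hsπ : ∀ μ ∈ Λ, π μ * s = μ • π μ := by
    intro μ hμ
    have h1 : π μ * s = s * π μ :=
      ((commute_aeval' (Commute.refl s) (Lagrange.basis Λ _root_.id μ)).symm).eq
    rw [h1]; exact hπs μ hμ
  have hπ_idem : ∀ μ ∈ Λ, π μ * π μ = π μ := by
    intro μ hμ
    show Polynomial.aeval s (Lagrange.basis Λ _root_.id μ) * Polynomial.aeval s (Lagrange.basis Λ _root_.id μ)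
      = Polynomial.aeval s (Lagrange.basis Λ _root_.id μ)
    rw [show Polynomial.aeval s (Lagrange.basis Λ _root_.id μ) * Polynomial.aeval s (Lagrange.basis Λ _root_.id μ)
      = Polynomial.aeval s (Lagrange.basis Λ _root_.id μ * Lagrange.basis Λ _root_.id μ) from
      (map_mul (Polynomial.aeval s) _ _).symm]
    apply haeq; intro ρ hρ
    rcases eq_or_ne ρ μ with rfl | hne
    · rw [eval_mul, hℓ_self ρ hρ, mul_one]
    · rw [eval_mul, hℓ_ne μ ρ hρ (Ne.symm hne), mul_zero]
  have hπ_fix : ∀ μ ∈ Λ, ∃ v : V, v ≠ 0 ∧ π μ v = v := by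
    intro μ hμ
    have hev : Module.End.HasEigenvalue s μ := Module.End.hasEigenvalue_iff_isRoot.mpr
      (by
        have h1 : μ ∈ (minpoly ℂ s).roots := by rw [← hΛval]; exact hμ
        exact (Polynomial.mem_roots hσ0).mp h1)
    obtain ⟨v, hv⟩ := hev.exists_hasEigenvector
    refine ⟨v, hv.2, ?_⟩
    show Polynomial.aeval s (Lagrange.basis Λ _root_.id μ) v = v
    rw [aeval_apply_of_smul s hv.apply_eq_smul, hℓ_self μ hμ, one_smul]
  -- the operators ad s, ad n, ad x on End V
  set adx : Module.End ℂ (Module.End ℂ V) :=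
    LinearMap.mulLeft ℂ x - LinearMap.mulRight ℂ x with hadxdef
  set ads : Module.End ℂ (Module.End ℂ V) :=
    LinearMap.mulLeft ℂ s - LinearMap.mulRight ℂ s with hadsdef
  set adn : Module.End ℂ (Module.End ℂ V) :=
    LinearMap.mulLeft ℂ n - LinearMap.mulRight ℂ n with hadndef
  have h_split : adx = adn + ads := by
    rw [hadxdef, hadndef, hadsdef, hx_eq, mulLeft_add', mulRight_add']; abel
  have hLs_ss : Module.End.IsSemisimple (LinearMap.mulLeft ℂ s : Module.End ℂ (Module.End ℂ V)) := by
    apply Module.End.isSemisimple_of_squarefree_aeval_eq_zero hsq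
    rw [aeval_mulLeft, minpoly.aeval]
    ext T; simp
  have hRs_ss : Module.End.IsSemisimple (LinearMap.mulRight ℂ s : Module.End ℂ (Module.End ℂ V)) := by
    apply Module.End.isSemisimple_of_squarefree_aeval_eq_zero hsq
    rw [aeval_mulRight, minpoly.aeval]
    ext T; simp
  have hads_ss : ads.IsSemisimple :=
    Module.End.IsSemisimple.sub_of_commute (commute_mulLeft_mulRight' s s) hLs_ss hRs_ss
  have hadn_nil : IsNilpotent adn :=
    Commute.isNilpotent_sub (commute_mulLeft_mulRight' n n)
      (isNilpotent_mulLeft' hn_nil) (isNilpotent_mulRight' hn_nil)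
  have hcomm_adn_ads : Commute adn ads :=
    Commute.sub_left
      ((commute_mulLeft_mulLeft' hns).sub_right (commute_mulLeft_mulRight' n s))
      (((commute_mulLeft_mulRight' s n).symm).sub_right (commute_mulRight_mulRight' hns))
  have hcomm_adx_ads : Commute adx ads := by
    rw [h_split]; exact hcomm_adn_ads.add_left (Commute.refl ads)
  have hcomm_adx_adn : Commute adx adn := by
    rw [h_split]; exact (Commute.refl adn).add_left hcomm_adn_ads.symm
  obtain ⟨n₀, hn₀mem, s₀, hs₀mem, hn₀nil, hs₀ss, hadx_eq⟩ :=
    Module.End.exists_isNilpotent_isSemisimple (f := adx)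
  have hs₀_comm : Commute ads s₀ := by
    have h := hs₀mem
    rw [Algebra.adjoin_singleton_eq_range_aeval] at h
    obtain ⟨p, hp⟩ := h
    rw [← hp]; exact commute_aeval' hcomm_adx_ads.symm p
  have hn₀_comm : Commute adn n₀ := by
    have h := hn₀mem
    rw [Algebra.adjoin_singleton_eq_range_aeval] at h
    obtain ⟨p, hp⟩ := h
    rw [← hp]; exact commute_aeval' hcomm_adx_adn.symm p
  have h_d_eq : s₀ - ads = adn - n₀ := by
    have h_sum_eq : adn + ads = n₀ + s₀ := by rw [← h_split, hadx_eq]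
    rw [sub_eq_sub_iff_add_eq_add, add_comm s₀ n₀, ← h_sum_eq, add_comm]
  have h_d0 : s₀ - ads = 0 :=
    Module.End.eq_zero_of_isNilpotent_isSemisimple
      (by rw [h_d_eq]; exact Commute.isNilpotent_sub hn₀_comm hadn_nil hn₀nil)
      (Module.End.IsSemisimple.sub_of_commute hs₀_comm.symm hs₀ss hads_ss)
  have hads_mem : ads ∈ Algebra.adjoin ℂ {adx} := by
    rw [show ads = s₀ from (sub_eq_zero.mp h_d0).symm]; exact hs₀mem
  have hadx_inv : ∀ T ∈ A, adx T ∈ A := by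
    intro T hT
    have h1 : adx T = x * T - T * x := by rw [hadxdef]; simp
    rw [h1]; exact hbr x hxA T hT
  have hads_inv : ∀ T ∈ A, ads T ∈ A := by
    intro T hT
    have h := hads_mem
    rw [Algebra.adjoin_singleton_eq_range_aeval] at h
    obtain ⟨p, hp⟩ := h
    rw [← hp]; exact aeval_apply_mem adx A hadx_inv p hT
  -- main step : all eigenvalues of s vanish
  suffices hΛ0 : ∀ μ ∈ Λ, μ = (0 : ℂ) by
    have hs0 : s = 0 := by
      have hσX : minpoly ℂ s = X ^ Λ.card := by
        rw [hσ_eq]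
        have hcon : ∀ μ ∈ Λ, (X - C μ : ℂ[X]) = X := fun μ hμ => by
          rw [hΛ0 μ hμ, map_zero, sub_zero]
        rw [Finset.prod_congr rfl hcon, Finset.prod_const]
      have h1 : Polynomial.aeval s (minpoly ℂ s) = 0 := minpoly.aeval ℂ s
      rw [hσX, map_pow, aeval_X] at h1
      exact Module.End.eq_zero_of_isNilpotent_isSemisimple ⟨Λ.card, h1⟩ hs_ss
    rw [hx_eq, hs0, add_zero]; exact hn_nil
  intro μ₀ hμ₀
  rw [← (Module.forall_dual_apply_eq_zero_iff ℚ μ₀)]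
  intro ψ
  -- construct the auxiliary operator y
  set P : ℂ[X] := ∑ μ ∈ Λ, C ((ψ μ : ℚ) : ℂ) * Lagrange.basis Λ _root_.id μ with hPdef
  set y : Module.End ℂ V := Polynomial.aeval s P with hydef
  have hPeval : ∀ ρ ∈ Λ, P.eval ρ = ((ψ ρ : ℚ) : ℂ) := by
    intro ρ hρ; rw [hPdef]; exact eval_lagrange_sum Λ _ hρ
  set Δ : Finset ℂ := (Λ ×ˢ Λ).image (fun pr => pr.1 - pr.2) with hΔdef
  set Q : ℂ[X] := ∑ c ∈ Δ, C ((ψ c : ℚ) : ℂ) * Lagrange.basis Δ _root_.id c with hQdef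
  have hQeval : ∀ c ∈ Δ, Q.eval c = ((ψ c : ℚ) : ℂ) := by
    intro c hc; rw [hQdef]; exact eval_lagrange_sum Δ _ hc
  have hyπ : ∀ ν ∈ Λ, y * π ν = ((ψ ν : ℚ) : ℂ) • π ν := by
    intro ν hν
    have h1 : y * π ν = Polynomial.aeval s (P * Lagrange.basis Λ _root_.id ν) := by
      rw [hydef, hπdef]; simp only []; rw [map_mul]
    have h2 : Polynomial.aeval s (P * Lagrange.basis Λ _root_.id ν)
        = Polynomial.aeval s (C ((ψ ν : ℚ) : ℂ) * Lagrange.basis Λ _root_.id ν) := by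
      apply haeq; intro ρ hρ
      rcases eq_or_ne ρ ν with rfl | hne
      · rw [eval_mul, eval_mul, hPeval ρ hρ, eval_C]
      · rw [eval_mul, eval_mul, hℓ_ne ν ρ hρ (Ne.symm hne), mul_zero, mul_zero]
    rw [h1, h2, map_mul, aeval_C, ← Algebra.smul_def]
  have hπy : ∀ ν ∈ Λ, π ν * y = ((ψ ν : ℚ) : ℂ) • π ν := by
    intro ν hν
    have h1 : π ν * y = y * π ν := by
      rw [hydef, hπdef]; simp only []; rw [← map_mul, ← map_mul, mul_comm]
    rw [h1]; exact hyπ ν hν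
  -- the inner derivation by y is a polynomial in ads
  have h_ady : LinearMap.mulLeft ℂ y - LinearMap.mulRight ℂ y = Polynomial.aeval ads Q := by
    apply LinearMap.ext; intro T
    have hT : T = ∑ ν ∈ Λ, ∑ μ ∈ Λ, π ν * T * π μ := by
      calc T = (∑ ν ∈ Λ, π ν) * T * (∑ μ ∈ Λ, π μ) := by rw [hπ_sum, one_mul, mul_one]
      _ = ∑ ν ∈ Λ, π ν * T * (∑ μ ∈ Λ, π μ) := by rw [Finset.sum_mul, Finset.sum_mul]
      _ = ∑ ν ∈ Λ, ∑ μ ∈ Λ, π ν * T * π μ := by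
          refine Finset.sum_congr rfl fun ν _ => ?_; rw [Finset.mul_sum]
    conv_lhs => rw [hT]
    conv_rhs => rw [hT]
    rw [map_sum, map_sum]
    refine Finset.sum_congr rfl fun ν hν => ?_
    rw [map_sum, map_sum]
    refine Finset.sum_congr rfl fun μ hμ => ?_
    have hleft : ∀ (u : Module.End ℂ V) (c : ℂ), u * π ν = c • π ν →
        u * (π ν * T * π μ) = c • (π ν * T * π μ) := by
      intro u c h
      calc u * (π ν * T * π μ) = u * (π ν * (T * π μ)) := by rw [mul_assoc (π ν) T (π μ)]
      _ = (u * π ν) * (T * π μ) := by rw [← mul_assoc]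
      _ = (c • π ν) * (T * π μ) := by rw [h]
      _ = c • (π ν * (T * π μ)) := by rw [smul_mul_assoc]
      _ = c • (π ν * T * π μ) := by rw [← mul_assoc]
    have hright : ∀ (u : Module.End ℂ V) (c : ℂ), π μ * u = c • π μ →
        (π ν * T * π μ) * u = c • (π ν * T * π μ) := by
      intro u c h
      calc (π ν * T * π μ) * u = (π ν * T) * (π μ * u) := by rw [mul_assoc]
      _ = (π ν * T) * (c • π μ) := by rw [h]
      _ = c • ((π ν * T) * π μ) := by rw [mul_smul_comm]
    have hL : (LinearMap.mulLeft ℂ y - LinearMap.mulRight ℂ y) (π ν * T * π μ)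
        = ((((ψ ν : ℚ) : ℂ)) - (((ψ μ : ℚ) : ℂ))) • (π ν * T * π μ) := by
      rw [LinearMap.sub_apply, LinearMap.mulLeft_apply, LinearMap.mulRight_apply,
        hleft y _ (hyπ ν hν), hright y _ (hπy μ hμ), ← sub_smul]
    have hE : ads (π ν * T * π μ) = (ν - μ) • (π ν * T * π μ) := by
      show (LinearMap.mulLeft ℂ s - LinearMap.mulRight ℂ s) (π ν * T * π μ) = _
      rw [LinearMap.sub_apply, LinearMap.mulLeft_apply, LinearMap.mulRight_apply,
        hleft s _ (hπs ν hν), hright s _ (hsπ μ hμ), ← sub_smul]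
    rw [hL, aeval_apply_of_smul ads hE Q]
    have hνμ : ν - μ ∈ Δ := by
      rw [hΔdef]; exact Finset.mem_image.mpr ⟨(ν, μ), Finset.mem_product.mpr ⟨hν, hμ⟩, rfl⟩
    rw [hQeval _ hνμ, map_sub]
    push_cast
    ring_nf
  have hady_inv : ∀ T ∈ A, y * T - T * y ∈ A := by
    intro T hT
    have h1 : (LinearMap.mulLeft ℂ y - LinearMap.mulRight ℂ y) T ∈ A := by
      rw [h_ady]; exact aeval_apply_mem ads A hads_inv Q hT
    simpa using h1
  -- the trace of x * y vanishes
  have htr_gen : ∀ z ∈ Submodule.span ℂ {z | ∃ a ∈ A, ∃ b ∈ A, z = a * b - b * a},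
      LinearMap.trace ℂ V (z * y) = 0 := by
    intro z hz
    induction hz using Submodule.span_induction with
    | mem w hw =>
      obtain ⟨a, ha, b, hb, rfl⟩ := hw
      have hmem : b * y - y * b ∈ A := by
        have h2 := hady_inv b hb
        simpa [neg_sub] using A.neg_mem h2
      have h3 : (a * b - b * a) * y = a * (b * y) - b * (a * y) := by
        rw [sub_mul, mul_assoc, mul_assoc]
      rw [h3, map_sub, trace_mul_comm ℂ b (a * y), mul_assoc]
      have h4 : LinearMap.trace ℂ V (a * (b * y)) - LinearMap.trace ℂ V (a * (y * b))
          = LinearMap.trace ℂ V (a * (b * y - y * b)) := by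
        rw [mul_sub, map_sub]
      rw [h4]
      exact htr a ha _ hmem
    | zero => simp
    | add u v hu hv ihu ihv => rw [add_mul, map_add, ihu, ihv, add_zero]
    | smul c u hu ihu => rw [smul_mul_assoc, map_smul, ihu, smul_zero]
  have htrxy : LinearMap.trace ℂ V (x * y) = 0 := htr_gen x hx
  have htrny : LinearMap.trace ℂ V (n * y) = 0 := by
    have hcny : Commute n y := by rw [hydef]; exact commute_aeval' hns P
    have h1 : IsNilpotent (n * y) := hcny.isNilpotent_mul_right hn_nil
    exact (LinearMap.isNilpotent_trace_of_isNilpotent h1).eq_zero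
  have hsy_eq : s * y = ∑ μ ∈ Λ, (μ * ((ψ μ : ℚ) : ℂ)) • π μ := by
    have h1 : s * y = Polynomial.aeval s (X * P) := by rw [hydef, map_mul, aeval_X]
    have h2 : Polynomial.aeval s (X * P)
        = Polynomial.aeval s (∑ μ ∈ Λ, C (μ * ((ψ μ : ℚ) : ℂ)) * Lagrange.basis Λ _root_.id μ) := by
      apply haeq; intro ρ hρ
      rw [eval_mul, eval_X, hPeval ρ hρ, eval_lagrange_sum Λ _ hρ]
    rw [h1, h2, map_sum]
    refine Finset.sum_congr rfl fun μ hμ => ?_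
    rw [map_mul, aeval_C, ← Algebra.smul_def, hπdef]
  have htrsy : LinearMap.trace ℂ V (s * y)
      = ∑ μ ∈ Λ, (μ * ((ψ μ : ℚ) : ℂ))
          * (Module.finrank ℂ (LinearMap.range (π μ)) : ℂ) := by
    rw [hsy_eq, map_sum]
    refine Finset.sum_congr rfl fun μ hμ => ?_
    rw [map_smul]
    have hproj : LinearMap.IsProj (LinearMap.range (π μ)) (π μ) := by
      refine ⟨fun v => LinearMap.mem_range_self _ v, ?_⟩
      rintro _ ⟨u, rfl⟩
      have h5 := LinearMap.ext_iff.mp (hπ_idem μ hμ) u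
      rwa [Module.End.mul_apply] at h5
    rw [hproj.trace, smul_eq_mul]
  have hsum0 : ∑ μ ∈ Λ, (μ * ((ψ μ : ℚ) : ℂ))
      * (Module.finrank ℂ (LinearMap.range (π μ)) : ℂ) = 0 := by
    rw [← htrsy]
    have h6 : LinearMap.trace ℂ V (x * y)
        = LinearMap.trace ℂ V (n * y) + LinearMap.trace ℂ V (s * y) := by
      rw [hx_eq, add_mul, map_add]
    rw [← htrxy, h6, htrny, zero_add]
  -- convert to a rational identity and conclude
  have hterm : ∀ μ ∈ Λ, (μ * ((ψ μ : ℚ) : ℂ))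
      * (Module.finrank ℂ (LinearMap.range (π μ)) : ℂ)
      = ((ψ μ * (Module.finrank ℂ (LinearMap.range (π μ)) : ℚ)) : ℚ) • μ := by
    intro μ _
    rw [Rat.smul_def]
    push_cast
    ring
  rw [Finset.sum_congr rfl hterm] at hsum0
  have h7 := congrArg ψ hsum0
  rw [map_sum, map_zero] at h7
  simp only [map_smul, smul_eq_mul] at h7
  have h8 : ∀ μ ∈ Λ, (0:ℚ) ≤ (Module.finrank ℂ (LinearMap.range (π μ)) : ℚ) * (ψ μ * ψ μ) := by
    intro μ _
    exact mul_nonneg (by positivity) (mul_self_nonneg _)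
  have h9 : ∀ μ ∈ Λ, ψ μ * (Module.finrank ℂ (LinearMap.range (π μ)) : ℚ) * ψ μ
      = (Module.finrank ℂ (LinearMap.range (π μ)) : ℚ) * (ψ μ * ψ μ) := by
    intro μ _; ring
  rw [Finset.sum_congr rfl h9] at h7
  have h10 := (Finset.sum_eq_zero_iff_of_nonneg h8).mp h7 μ₀ hμ₀
  have h11 : (Module.finrank ℂ (LinearMap.range (π μ₀)) : ℚ) ≠ 0 := by
    obtain ⟨v, hv0, hvfix⟩ := hπ_fix μ₀ hμ₀
    have hvmem : v ∈ LinearMap.range (π μ₀) := ⟨v, hvfix⟩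
    have hpos : 0 < Module.finrank ℂ (LinearMap.range (π μ₀)) := by
      apply Module.finrank_pos_iff.mpr
      exact ⟨⟨⟨v, hvmem⟩, 0, by simp [Subtype.ext_iff, hv0]⟩⟩
    exact_mod_cast hpos.ne'
  have h12 : ψ μ₀ * ψ μ₀ = 0 := by
    rcases mul_eq_zero.mp h10 with h | h
    · exact absurd h h11
    · exact h
  exact mul_self_eq_zero.mp h12

end CartanCore


section CartanCriterion

attribute [local instance 100] LieRing.ofAssociativeRing

private theorem isSolvable_of_killing_zero (K : Type*) [LieRing K] [LieAlgebra ℂ K]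
    [FiniteDimensional ℂ K]
    (h : ∀ u v : K, killingForm ℂ K u v = 0) : LieAlgebra.IsSolvable K := by
  classical
  set A : Submodule ℂ (Module.End ℂ K) :=
    LinearMap.range ((LieAlgebra.ad ℂ K).toLinearMap) with hAdef
  have hbr : ∀ a ∈ A, ∀ b ∈ A, a * b - b * a ∈ A := by
    rintro _ ⟨u, rfl⟩ _ ⟨v, rfl⟩
    refine ⟨⁅u, v⁆, ?_⟩
    have h1 := (LieAlgebra.ad ℂ K).map_lie u v
    simp only [LieHom.coe_toLinearMap]
    rw [h1, Ring.lie_def]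
  have htr : ∀ a ∈ A, ∀ b ∈ A, LinearMap.trace ℂ K (a * b) = 0 := by
    rintro _ ⟨u, rfl⟩ _ ⟨v, rfl⟩
    have h1 := killingForm_apply_apply (R := ℂ) (L := K) u v
    have h2 : (LieAlgebra.ad ℂ K u) * (LieAlgebra.ad ℂ K v)
        = (LieAlgebra.ad ℂ K u) ∘ₗ (LieAlgebra.ad ℂ K v) := rfl
    simp only [LieHom.coe_toLinearMap]
    rw [h2, ← h1, h]
  have key : ∀ z : K, z ∈ LieAlgebra.derivedSeries ℂ K 1 → IsNilpotent (LieAlgebra.ad ℂ K z) := by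
    intro z hz
    apply isNilpotent_of_traceless A hbr htr (LinearMap.mem_range_self _ z)
    have h1 : LieAlgebra.derivedSeries ℂ K 1 = ⁅(⊤ : LieIdeal ℂ K), (⊤ : LieIdeal ℂ K)⁆ := by
      rw [LieAlgebra.derivedSeries_def]
      rw [show (1 : ℕ) = 0 + 1 from rfl, LieAlgebra.derivedSeriesOfIdeal_succ,
        LieAlgebra.derivedSeriesOfIdeal_zero]
    rw [h1] at hz
    have h2 : z ∈ Submodule.span ℂ
        {m : K | ∃ x ∈ (⊤ : LieIdeal ℂ K), ∃ n ∈ (⊤ : LieIdeal ℂ K), ⁅x, n⁆ = m} := by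
      rw [← LieSubmodule.lieIdeal_oper_eq_linear_span']
      exact hz
    have h3 := Submodule.mem_map_of_mem (f := (LieAlgebra.ad ℂ K).toLinearMap) h2
    rw [Submodule.map_span] at h3
    refine Submodule.span_le.mpr ?_ h3
    rintro _ ⟨m, ⟨u, -, v, -, rfl⟩, rfl⟩
    apply Submodule.subset_span
    refine ⟨LieAlgebra.ad ℂ K u, ⟨u, rfl⟩, LieAlgebra.ad ℂ K v, ⟨v, rfl⟩, ?_⟩
    have h4 := (LieAlgebra.ad ℂ K).map_lie u v
    simp only [LieHom.coe_toLinearMap]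
    rw [h4, Ring.lie_def]
  set D : LieIdeal ℂ K := LieAlgebra.derivedSeries ℂ K 1 with hDdef
  have hDnilp : LieRing.IsNilpotent D := by
    rw [LieAlgebra.isNilpotent_iff_forall (R := ℂ)]
    intro z
    obtain ⟨k, hk⟩ := key (z : K) z.2
    refine ⟨k, ?_⟩
    have hcoe : ∀ (i : ℕ) (w : D), (((LieAlgebra.ad ℂ D z) ^ i) w : K)
        = ((LieAlgebra.ad ℂ K (z : K)) ^ i) (w : K) := by
      intro i
      induction i with
      | zero => intro w; simp
      | succ m ih =>
        intro w
        rw [pow_succ', pow_succ', Module.End.mul_apply, Module.End.mul_apply]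
        have h4 : ((LieAlgebra.ad ℂ D z) (((LieAlgebra.ad ℂ D z) ^ m) w) : K)
            = ⁅(z : K), (((LieAlgebra.ad ℂ D z) ^ m) w : K)⁆ := rfl
        rw [h4, ih w]
        rfl
    ext w
    have h5 := hcoe k w
    rw [hk] at h5
    simp only [LinearMap.zero_apply] at h5 ⊢
    simpa using h5
  haveI hsolvD : LieAlgebra.IsSolvable D := inferInstance
  obtain ⟨k, hk⟩ := LieAlgebra.IsSolvable.solvable ℂ D
  have hfin : LieAlgebra.derivedSeriesOfIdeal ℂ K k D = ⊥ :=
    (LieIdeal.derivedSeries_eq_bot_iff D k).mp hk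
  refine LieAlgebra.IsSolvable.mk (R := ℂ) (k := k + 1) ?_
  rw [LieAlgebra.derivedSeries_def, LieAlgebra.derivedSeriesOfIdeal_add ⊤ k 1,
    ← LieAlgebra.derivedSeries_def]
  exact hfin

end CartanCriterion

theorem stmt8 (L : Type*) [LieRing L] [LieAlgebra ℂ L] [FiniteDimensional ℂ L]
    (L₀ : LieSubalgebra ℂ L)
    (htrans : ∀ J : LieIdeal ℂ L, (∀ x ∈ J, x ∈ L₀) → J = ⊥)
    (hproper : L₀ ≠ ⊤)
    (hmax : ∀ K : LieSubalgebra ℂ L, L₀ ≤ K → K = L₀ ∨ K = ⊤)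
    (hnonlin : ∃ x : L, x ≠ 0 ∧ x ∈ L₀ ∧ ∀ y : L, ⁅x, y⁆ ∈ L₀) :
    LieAlgebra.IsSimple ℂ L ∧
    (∀ x ∈ {z : L | z ∈ L₀ ∧ ∀ w : L, ⁅z, w⁆ ∈ L₀},
       ∀ y ∈ {z : L | z ∈ L₀ ∧ ∀ w : L, ⁅z, w⁆ ∈ L₀}, ⁅x, y⁆ = 0) ∧
    (∀ x ∈ {z : L | z ∈ L₀ ∧ ∀ w : L, ⁅z, w⁆ ∈ L₀},
       (∀ y : L, ⁅x, y⁆ ∈ {z : L | z ∈ L₀ ∧ ∀ w : L, ⁅z, w⁆ ∈ L₀}) → x = 0) := by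
  classical
  obtain ⟨x₀, hx₀ne, hx₀mem, hx₀lie⟩ := hnonlin
  -- transitivity in submodule form
  have htrans' : ∀ V : Submodule ℂ L, (∀ v ∈ V, v ∈ L₀) →
      (∀ v ∈ V, ∀ y : L, ⁅y, v⁆ ∈ V) → V = ⊥ := by
    intro V hVP hVst
    have hJ : ({ toSubmodule := V, lie_mem := fun {y} {m} hm => hVst m hm y } : LieIdeal ℂ L) = ⊥ :=
      htrans _ (fun v hv => hVP v hv)
    have h2 := congrArg LieSubmodule.toSubmodule hJ
    simpa using h2
  -- the space L₁
  set Lone : Submodule ℂ L :=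
    { carrier := {z : L | z ∈ L₀ ∧ ∀ w : L, ⁅z, w⁆ ∈ L₀},
      add_mem' := fun h1 h2 => ⟨L₀.add_mem h1.1 h2.1,
        fun w => by rw [add_lie]; exact L₀.add_mem (h1.2 w) (h2.2 w)⟩,
      zero_mem' := ⟨L₀.zero_mem, fun w => by rw [zero_lie]; exact L₀.zero_mem⟩,
      smul_mem' := fun c z h => ⟨L₀.smul_mem c h.1,
        fun w => by rw [smul_lie]; exact L₀.smul_mem c (h.2 w)⟩ } with hLonedef
  have hLone_mem : ∀ z, z ∈ Lone ↔ (z ∈ L₀ ∧ ∀ w : L, ⁅z, w⁆ ∈ L₀) := fun z => Iff.rfl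
  have hLone_ne : Lone ≠ ⊥ := by
    intro h
    apply hx₀ne
    have : x₀ ∈ (⊥ : Submodule ℂ L) := h ▸ (hLone_mem x₀).mpr ⟨hx₀mem, hx₀lie⟩
    simpa using this
  have hP_Lone : ∀ a ∈ L₀, ∀ z ∈ Lone, ⁅a, z⁆ ∈ Lone := by
    intro a ha z hz
    obtain ⟨hz1, hz2⟩ := (hLone_mem z).mp hz
    refine (hLone_mem _).mpr ⟨L₀.lie_mem ha hz1, fun w => ?_⟩
    rw [lie_lie]
    exact L₀.sub_mem (L₀.lie_mem ha (hz2 w)) (hz2 ⁅a, w⁆)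
  -- decomposition L = L₀ + J for a nonzero ideal J
  have hdecomp : ∀ J : LieIdeal ℂ L, J ≠ ⊥ → ∀ z : L, ∃ a ∈ L₀, ∃ b ∈ J, a + b = z := by
    intro J hJ z
    have hKsub : ∀ {u v : L}, u ∈ (L₀.toSubmodule ⊔ J.toSubmodule : Submodule ℂ L) →
        v ∈ (L₀.toSubmodule ⊔ J.toSubmodule : Submodule ℂ L) →
        ⁅u, v⁆ ∈ (L₀.toSubmodule ⊔ J.toSubmodule : Submodule ℂ L) := by
      intro u v hu hv
      obtain ⟨a, ha, b, hb, rfl⟩ := Submodule.mem_sup.mp hu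
      obtain ⟨c, hc, d, hd, rfl⟩ := Submodule.mem_sup.mp hv
      have ha' : a ∈ L₀ := ha
      have hc' : c ∈ L₀ := hc
      have hexp : ⁅a + b, c + d⁆ = ⁅a, c⁆ + (⁅a, d⁆ + (⁅b, c⁆ + ⁅b, d⁆)) := by
        rw [add_lie, lie_add, lie_add]; abel
      rw [hexp]
      apply Submodule.add_mem
      · exact Submodule.mem_sup_left (L₀.lie_mem ha' hc')
      · apply Submodule.mem_sup_right
        apply Submodule.add_mem
        · exact J.lie_mem hd
        · apply Submodule.add_mem
          · have : ⁅b, c⁆ = -⁅c, b⁆ := (lie_skew b c).symm ▸ rfl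
            rw [← lie_skew]
            exact Submodule.neg_mem _ (J.lie_mem hb)
          · exact J.lie_mem hd
    set Ksub : LieSubalgebra ℂ L :=
      { toSubmodule := L₀.toSubmodule ⊔ J.toSubmodule,
        lie_mem' := fun hu hv => hKsub hu hv } with hKsubdef
    have hle : L₀ ≤ Ksub := by
      intro u hu
      exact Submodule.mem_sup_left hu
    rcases hmax Ksub hle with hK0 | hKtop
    · exfalso
      apply hJ
      apply htrans
      intro b hb
      have h1 : b ∈ Ksub := Submodule.mem_sup_right hb
      rw [hK0] at h1
      exact h1
    · have h1 : z ∈ Ksub := by rw [hKtop]; exact trivial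
      exact Submodule.mem_sup.mp h1
  -- the centralizer trick
  have hcent : ∀ S : LieIdeal ℂ L, S ≠ ⊥ →
      (∃ c : L, c ≠ 0 ∧ ∀ s ∈ S, ⁅c, s⁆ = 0) → False := by
    rintro S hSne ⟨c₀, hc₀ne, hc₀⟩
    set Csub : Submodule ℂ L :=
      { carrier := {z : L | ∀ s ∈ S, ⁅z, s⁆ = 0},
        add_mem' := fun h1 h2 => fun s hs => by rw [add_lie, h1 s hs, h2 s hs, add_zero],
        zero_mem' := fun s hs => zero_lie s,
        smul_mem' := fun c z h => fun s hs => by rw [smul_lie, h s hs, smul_zero] } with hCsubdef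
    set C : LieIdeal ℂ L :=
      { toSubmodule := Csub,
        lie_mem := by
          intro y z hz
          intro s hs
          have h1 : ⁅⁅y, z⁆, s⁆ = ⁅y, ⁅z, s⁆⁆ - ⁅z, ⁅y, s⁆⁆ := lie_lie y z s
          rw [h1, hz s hs, hz ⁅y, s⁆ (S.lie_mem hs), lie_zero, zero_sub, neg_zero] } with hCdef
    have hCne : C ≠ ⊥ := by
      intro h
      apply hc₀ne
      have h1 : c₀ ∈ C := fun s hs => hc₀ s hs
      rw [h] at h1
      simpa using h1
    -- the span of brackets [S, Lone] is a g-stable subspace of L₀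
    set gens : Set L := {z : L | ∃ s ∈ S, ∃ t ∈ Lone, z = ⁅s, t⁆} with hgensdef
    have hspan_bot : Submodule.span ℂ gens = ⊥ := by
      apply htrans'
      · intro v hv
        induction hv using Submodule.span_induction with
        | mem w hw =>
          obtain ⟨s, hs, t, ht, rfl⟩ := hw
          have h1 : ⁅t, s⁆ ∈ L₀ := ((hLone_mem t).mp ht).2 s
          rw [← lie_skew]
          exact L₀.neg_mem h1
        | zero => exact L₀.zero_mem
        | add u v _ _ ihu ihv => exact L₀.add_mem ihu ihv
        | smul c u _ ihu => exact L₀.smul_mem c ihu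
      · intro v hv
        induction hv using Submodule.span_induction with
        | mem w hw =>
          intro y
          obtain ⟨s, hs, t, ht, rfl⟩ := hw
          obtain ⟨a, ha, b, hb, rfl⟩ := hdecomp C hCne y
          have hst_mem : ⁅s, t⁆ ∈ S := by
            rw [← lie_skew]
            exact Submodule.neg_mem _ (S.lie_mem hs)
          have h2 : ⁅b, ⁅s, t⁆⁆ = 0 := hb _ hst_mem
          rw [add_lie, h2, add_zero, leibniz_lie]
          apply Submodule.add_mem
          · exact Submodule.subset_span ⟨⁅a, s⁆, S.lie_mem hs, t, ht, rfl⟩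
          · exact Submodule.subset_span ⟨s, hs, ⁅a, t⁆, hP_Lone a ha t ht, rfl⟩
        | zero => intro y; rw [lie_zero]; exact Submodule.zero_mem _
        | add u v _ _ ihu ihv =>
          intro y; rw [lie_add]; exact Submodule.add_mem _ (ihu y) (ihv y)
        | smul c u _ ihu =>
          intro y; rw [lie_smul]; exact Submodule.smul_mem _ c (ihu y)
    have hST : ∀ s ∈ S, ∀ t ∈ Lone, ⁅s, t⁆ = 0 := by
      intro s hs t ht
      have h1 : ⁅s, t⁆ ∈ Submodule.span ℂ gens :=
        Submodule.subset_span ⟨s, hs, t, ht, rfl⟩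
      rw [hspan_bot] at h1
      simpa using h1
    apply hLone_ne
    apply htrans'
    · intro v hv; exact ((hLone_mem v).mp hv).1
    · intro v hv y
      obtain ⟨a, ha, b, hb, rfl⟩ := hdecomp S hSne y
      rw [add_lie, hST b hb v hv, add_zero]
      exact hP_Lone a ha v hv
  -- no nonzero abelian ideals
  have hnoab : ∀ Aid : LieIdeal ℂ L, Aid ≠ ⊥ →
      (∀ a ∈ Aid, ∀ b ∈ Aid, ⁅a, b⁆ = 0) → False := by
    intro Aid hne hab
    have h1 : ∃ c, c ∈ Aid ∧ c ≠ 0 := by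
      by_contra hcon
      push_neg at hcon
      exact hne ((LieSubmodule.eq_bot_iff _).mpr fun m hm => hcon m hm)
    obtain ⟨c, hc, hcne⟩ := h1
    exact hcent Aid hne ⟨c, hcne, fun s hs => hab c hc s hs⟩
  -- ideals on which the Killing form vanishes are zero
  have hsolvkill : ∀ I : LieIdeal ℂ L,
      (∀ u ∈ I, ∀ v ∈ I, killingForm ℂ L u v = 0) → I = ⊥ := by
    intro I hI
    by_contra hne
    have hkI : ∀ u v : I, killingForm ℂ I u v = 0 := by
      intro u v
      rw [LieIdeal.killingForm_eq (R := ℂ) (L := L) (I := I)]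
      exact hI u u.2 v v.2
    have hsolv : LieAlgebra.IsSolvable I := isSolvable_of_killing_zero I hkI
    obtain ⟨k, hk⟩ := LieAlgebra.IsSolvable.solvable ℂ I
    have hk' : LieAlgebra.derivedSeriesOfIdeal ℂ L k I = ⊥ :=
      (LieIdeal.derivedSeries_eq_bot_iff I k).mp hk
    have hex : ∃ j, LieAlgebra.derivedSeriesOfIdeal ℂ L j I = ⊥ := ⟨k, hk'⟩
    have hj : LieAlgebra.derivedSeriesOfIdeal ℂ L (Nat.find hex) I = ⊥ := Nat.find_spec hex
    have hjne : Nat.find hex ≠ 0 := by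
      intro h0
      apply hne
      have h9 := hj
      rw [h0, LieAlgebra.derivedSeriesOfIdeal_zero] at h9
      exact h9
    obtain ⟨m, hm⟩ := Nat.exists_eq_succ_of_ne_zero hjne
    have hAne : LieAlgebra.derivedSeriesOfIdeal ℂ L m I ≠ ⊥ :=
      Nat.find_min hex (by omega)
    apply hnoab _ hAne
    intro a ha b hb
    have h2 : ⁅a, b⁆ ∈ ⁅LieAlgebra.derivedSeriesOfIdeal ℂ L m I,
        LieAlgebra.derivedSeriesOfIdeal ℂ L m I⁆ := LieSubmodule.lie_mem_lie ha hb
    have h3 : (⁅LieAlgebra.derivedSeriesOfIdeal ℂ L m I,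
        LieAlgebra.derivedSeriesOfIdeal ℂ L m I⁆ : LieIdeal ℂ L) = ⊥ := by
      rw [← LieAlgebra.derivedSeriesOfIdeal_succ]
      rw [hm] at hj
      exact hj
    rw [h3] at h2
    simpa using h2
  -- the Killing form is nondegenerate
  have hker : LieIdeal.killingCompl ℂ L ⊤ = ⊥ := by
    apply hsolvkill
    intro u hu v hv
    exact (LieIdeal.mem_killingCompl _ _ _).mp hv u (by simp)
  haveI hKilling : LieAlgebra.IsKilling ℂ L := ⟨hker⟩
  -- simplicity
  have hsimple : LieAlgebra.IsSimple ℂ L := by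
    refine ⟨fun I => ?_, fun habel => ?_⟩
    · by_contra hcon
      push_neg at hcon
      obtain ⟨hIne, hItop⟩ := hcon
      have hinf_bot : (I ⊓ LieIdeal.killingCompl ℂ L I : LieIdeal ℂ L) = ⊥ := by
        apply hsolvkill
        intro u hu v hv
        have hv2 := ((LieSubmodule.mem_inf _ _ _).mp hv).2
        exact (LieIdeal.mem_killingCompl _ _ _).mp hv2 u ((LieSubmodule.mem_inf _ _ _).mp hu).1
      obtain ⟨c, hcmem, hcne⟩ : ∃ c, c ∈ LieIdeal.killingCompl ℂ L I ∧ c ≠ 0 := by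
        set Φ : L →ₗ[ℂ] (I.toSubmodule →ₗ[ℂ] ℂ) :=
          { toFun := fun z => (killingForm ℂ L z).comp I.toSubmodule.subtype,
            map_add' := by intro a b; ext w; simp,
            map_smul' := by intro c a; ext w; simp } with hΦdef
        have hIlt : Module.finrank ℂ I.toSubmodule < Module.finrank ℂ L := by
          apply Submodule.finrank_lt
          rcases lt_or_eq_of_le (le_top : I.toSubmodule ≤ ⊤) with h | h
          · exact h.ne
          · exfalso
            apply hItop
            ext z
            simp only [LieSubmodule.mem_top]
            constructor
            · intro _; trivial
            · intro _
              have : z ∈ I.toSubmodule := h ▸ Submodule.mem_top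
              exact this
        have hkerne : LinearMap.ker Φ ≠ ⊥ := by
          intro h
          have hrank := LinearMap.finrank_range_add_finrank_ker Φ
          rw [h, finrank_bot, add_zero] at hrank
          have h2 : Module.finrank ℂ (LinearMap.range Φ)
              ≤ Module.finrank ℂ (Module.Dual ℂ I.toSubmodule) :=
            Submodule.finrank_le _
          rw [Subspace.dual_finrank_eq] at h2
          omega
        obtain ⟨c, hc1, hc2⟩ := Submodule.ne_bot_iff _ |>.mp hkerne
        refine ⟨c, ?_, hc2⟩
        rw [LieIdeal.mem_killingCompl]
        intro y hy
        have h3 : Φ c = 0 := hc1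
        have h4 := LinearMap.congr_fun h3 ⟨y, hy⟩
        simp only [hΦdef, LinearMap.coe_mk, AddHom.coe_mk, LinearMap.comp_apply,
          Submodule.coe_subtype, LinearMap.zero_apply] at h4
        rw [LieModule.traceForm_comm]
        exact h4
      apply hcent I hIne
      refine ⟨c, hcne, fun s hs => ?_⟩
      have h5 : ⁅c, s⁆ ∈ (I ⊓ LieIdeal.killingCompl ℂ L I : LieIdeal ℂ L) := by
        rw [LieSubmodule.mem_inf]
        constructor
        · exact I.lie_mem hs
        · rw [← lie_skew]
          exact Submodule.neg_mem _ ((LieIdeal.killingCompl ℂ L I).lie_mem hcmem)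
      rw [hinf_bot] at h5
      simpa using h5
    · apply hx₀ne
      have h1 : Submodule.span ℂ {x₀} = ⊥ := by
        apply htrans'
        · intro v hv
          have h2 : Submodule.span ℂ {x₀} ≤ L₀.toSubmodule := by
            rw [Submodule.span_le, Set.singleton_subset_iff]
            exact hx₀mem
          exact h2 hv
        · intro v hv y
          have h3 : ⁅y, v⁆ = 0 := trivial_lie_zero _ _ _ _
          rw [h3]
          exact Submodule.zero_mem _
      have : x₀ ∈ (⊥ : Submodule ℂ L) := h1 ▸ Submodule.mem_span_singleton_self x₀
      simpa using this
  -- the filtration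
  set Dstep : Submodule ℂ L → Submodule ℂ L := fun W =>
    { carrier := {z : L | z ∈ W ∧ ∀ w : L, ⁅z, w⁆ ∈ W},
      add_mem' := fun h1 h2 => ⟨W.add_mem h1.1 h2.1,
        fun w => by rw [add_lie]; exact W.add_mem (h1.2 w) (h2.2 w)⟩,
      zero_mem' := ⟨W.zero_mem, fun w => by rw [zero_lie]; exact W.zero_mem⟩,
      smul_mem' := fun c z h => ⟨W.smul_mem c h.1,
        fun w => by rw [smul_lie]; exact W.smul_mem c (h.2 w)⟩ } with hDstepdef
  set g : ℕ → Submodule ℂ L := fun k => Dstep^[k] L₀.toSubmodule with hgdef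
  have hg0 : g 0 = L₀.toSubmodule := rfl
  have hgsucc : ∀ k, g (k + 1) = Dstep (g k) := by
    intro k
    rw [hgdef]
    simp only []
    rw [Function.iterate_succ_apply']
  have hgmem : ∀ k z, z ∈ g (k + 1) ↔ (z ∈ g k ∧ ∀ w : L, ⁅z, w⁆ ∈ g k) := by
    intro k z
    rw [hgsucc k]
    exact Iff.rfl
  have hgle : ∀ k, g (k + 1) ≤ g k := fun k z hz => ((hgmem k z).mp hz).1
  have hgP : ∀ k, g k ≤ L₀.toSubmodule := by
    intro k
    induction k with
    | zero => exact le_rfl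
    | succ m ih => exact le_trans (hgle m) ih
  have hgstep : ∀ k, ∀ z ∈ g (k + 1), ∀ w : L, ⁅z, w⁆ ∈ g k :=
    fun k z hz => ((hgmem k z).mp hz).2
  -- bracket grading
  have F2 : ∀ N i j, i + j ≤ N → ∀ u ∈ g i, ∀ v ∈ g j, ⁅u, v⁆ ∈ g (i + j) := by
    intro N
    induction N with
    | zero =>
      intro i j hij u hu v hv
      have hi : i = 0 := by omega
      have hj : j = 0 := by omega
      subst hi; subst hj
      exact L₀.lie_mem hu hv
    | succ N ih =>
      intro i j hij u hu v hv
      match i, j with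
      | 0, 0 => exact L₀.lie_mem hu hv
      | 0, j + 1 =>
        have e : 0 + (j + 1) = j + 1 := by omega
        rw [e, hgsucc j]
        refine ⟨?_, ?_⟩
        · have h1 := ih 0 j (by omega) u hu v (hgle j hv)
          simpa using h1
        · intro w
          rw [lie_lie]
          apply Submodule.sub_mem
          · have h2 := ih 0 j (by omega) u hu ⁅v, w⁆ (hgstep j v hv w)
            simpa using h2
          · exact hgstep j v hv ⁅u, w⁆
      | i + 1, 0 =>
        have e : (i + 1) + 0 = i + 1 := by omega
        rw [e]
        have hvu : ⁅v, u⁆ ∈ g (i + 1) := by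
          rw [hgsucc i]
          refine ⟨?_, ?_⟩
          · have h1 := ih 0 i (by omega) v hv u (hgle i hu)
            simpa using h1
          · intro w
            rw [lie_lie]
            apply Submodule.sub_mem
            · have h2 := ih 0 i (by omega) v hv ⁅u, w⁆ (hgstep i u hu w)
              simpa using h2
            · exact hgstep i u hu ⁅v, w⁆
        rw [← lie_skew]
        exact Submodule.neg_mem _ hvu
      | i + 1, j + 1 =>
        have e : (i + 1) + (j + 1) = (i + j + 1) + 1 := by omega
        rw [e, hgsucc]
        refine ⟨?_, ?_⟩
        · have h1 := ih (i + 1) j (by omega) u hu v (hgle j hv)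
          have e2 : (i + 1) + j = i + j + 1 := by omega
          rw [e2] at h1
          exact h1
        · intro w
          rw [lie_lie]
          apply Submodule.sub_mem
          · have h2 := ih (i + 1) j (by omega) u hu ⁅v, w⁆ (hgstep j v hv w)
            have e3 : (i + 1) + j = i + j + 1 := by omega
            rw [e3] at h2
            exact h2
          · have h3 := ih (j + 1) i (by omega) v hv ⁅u, w⁆ (hgstep i u hu w)
            have e4 : (j + 1) + i = i + j + 1 := by omega
            rw [e4] at h3
            exact h3
  -- the filtration terminates
  have hstep_bot : ∀ k, g (k + 1) = g k → g k = ⊥ := by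
    intro k hk
    apply htrans'
    · intro v hv
      exact hgP k hv
    · intro v hv y
      have hv' : v ∈ g (k + 1) := by rw [hk]; exact hv
      have h1 := hgstep k v hv' y
      rw [← lie_skew]
      exact Submodule.neg_mem _ h1
  have hexists : ∃ k, g (k + 1) = g k := by
    by_contra hcon
    push_neg at hcon
    have hlt : ∀ k, Module.finrank ℂ (g (k + 1)) < Module.finrank ℂ (g k) := by
      intro k
      exact Submodule.finrank_lt_finrank_of_lt (lt_of_le_of_ne (hgle k) (hcon k))
    have hdesc : ∀ k, Module.finrank ℂ (g k) + k ≤ Module.finrank ℂ (g 0) := by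
      intro k
      induction k with
      | zero => omega
      | succ m ih =>
        have := hlt m
        omega
    have := hdesc (Module.finrank ℂ (g 0) + 1)
    omega
  obtain ⟨k₀, hk₀⟩ := hexists
  have hgbot : g k₀ = ⊥ := hstep_bot k₀ hk₀
  have hg1bot : g (k₀ + 1) = ⊥ := le_bot_iff.mp (hgbot ▸ hgle k₀)
  -- elements of g 2 are zero
  have hpart3 : ∀ z ∈ g 2, z = (0 : L) := by
    intro z hz
    have hκ : ∀ y : L, killingForm ℂ L z y = 0 := by
      intro y
      set φ : Module.End ℂ L := (LieAlgebra.ad ℂ L z) * (LieAlgebra.ad ℂ L y) with hφdef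
      have hφ_apply : ∀ v : L, φ v = ⁅z, ⁅y, v⁆⁆ := by
        intro v
        rw [hφdef]
        simp [LieAlgebra.ad_apply]
      have hchain : ∀ k, ∀ v : L, (φ ^ (k + 1)) v ∈ g (k + 1) := by
        intro k
        induction k with
        | zero =>
          intro v
          rw [pow_one, hφ_apply v]
          exact hgstep 1 z hz ⁅y, v⁆
        | succ m ih =>
          intro v
          rw [pow_succ', Module.End.mul_apply, hφ_apply]
          have hw : (φ ^ (m + 1)) v ∈ g (m + 1) := ih v
          have h1 : ⁅y, (φ ^ (m + 1)) v⁆ ∈ g m := by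
            have h2 := hgstep m _ hw y
            rw [← lie_skew]
            exact Submodule.neg_mem _ h2
          have h4 := F2 (2 + m) 2 m le_rfl z hz ⁅y, (φ ^ (m + 1)) v⁆ h1
          have e : 2 + m = m + 1 + 1 := by omega
          rw [e] at h4
          exact h4
      have hnilφ : IsNilpotent φ := by
        refine ⟨k₀ + 1, ?_⟩
        ext v
        have h6 := hchain k₀ v
        rw [hg1bot] at h6
        simpa using h6
      have htr0 : LinearMap.trace ℂ L φ = 0 :=
        (LinearMap.isNilpotent_trace_of_isNilpotent hnilφ).eq_zero
      rw [killingForm_apply_apply]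
      exact htr0
    have hker2 : z ∈ LinearMap.ker (killingForm ℂ L) := by
      rw [LinearMap.mem_ker]
      exact LinearMap.ext fun y => by rw [hκ y]; simp
    rw [LieAlgebra.IsKilling.ker_killingForm_eq_bot] at hker2
    simpa using hker2
  refine ⟨hsimple, ?_, ?_⟩
  · intro x hx y hy
    have hx1 : x ∈ g 1 := by
      rw [hgsucc 0]
      exact hx
    have hy1 : y ∈ g 1 := by
      rw [hgsucc 0]
      exact hy
    have h1 : ⁅x, y⁆ ∈ g 2 := by
      have := F2 2 1 1 le_rfl x hx1 y hy1
      exact this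
    exact hpart3 _ h1
  · intro x hx hy
    apply hpart3
    rw [show (2 : ℕ) = 1 + 1 from rfl, hgsucc 1]
    refine ⟨?_, ?_⟩
    · rw [hgsucc 0]; exact hx
    · intro w
      rw [hgsucc 0]
      exact hy w
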